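/- For fixed q ∈ (0,1/2) and p → 1, r(p,q) ≤ d(p,q) for p sufficiently close to 1, and both converge to the common limit −log q; in particular the converse and achievability exponents coincide in this limit. -/

import Mathlib

open Real Filter

lemma aux_xt : Tendsto (fun p : ℝ => logb 2 (1 - p)) (nhdsWithin 1 (Set.Iio 1)) atBot := by
  have h1 : Tendsto (fun p : ℝ => 1 - p) (nhdsWithin 1 (Set.Iio 1))
      (nhdsWithin 0 (Set.Ioi 0)) := by
    apply tendsto_nhdsWithin_of_tendsto_nhds_of_eventually_within
    · have : Tendsto (fun p : ℝ => 1 - p) (nhds 1) (nhds (1 - 1)) :=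
        (continuous_const.sub continuous_id).tendsto 1
      simpa using this.mono_left nhdsWithin_le_nhds
    · filter_upwards [self_mem_nhdsWithin] with p hp
      exact Set.mem_Ioi.2 (by simp at hp; linarith)
  have hlog : Tendsto (fun p : ℝ => Real.log (1 - p)) (nhdsWithin 1 (Set.Iio 1)) atBot :=
    Real.tendsto_log_nhdsGT_zero.comp h1
  have : Tendsto (fun p : ℝ => Real.log (1 - p) / Real.log 2)
      (nhdsWithin 1 (Set.Iio 1)) atBot :=
    hlog.atBot_div_const (Real.log_pos one_lt_two)
  simpa [Real.logb] using this

lemma aux_inv_xt : Tendsto (fun p : ℝ => (logb 2 (1 - p))⁻¹)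
    (nhdsWithin 1 (Set.Iio 1)) (nhds 0) := by
  have hneg : Tendsto (fun p : ℝ => -logb 2 (1 - p)) (nhdsWithin 1 (Set.Iio 1)) atTop :=
    tendsto_neg_atBot_atTop.comp aux_xt
  have := hneg.inv_tendsto_atTop
  have h2 : Tendsto (fun p : ℝ => -(-logb 2 (1 - p))⁻¹)
      (nhdsWithin 1 (Set.Iio 1)) (nhds (-0)) := this.neg
  simpa only [inv_neg, neg_neg, neg_zero] using h2

theorem stmt_11 (q : ℝ) (hq0 : 0 < q) (hq : q < 1 / 2) :
    (∀ᶠ p : ℝ in nhdsWithin 1 (Set.Iio 1),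
        (logb 2 p * logb 2 (1 - q) - logb 2 q * logb 2 (1 - p)) /
            (logb 2 (p * (1 - p)) + logb 2 (q * (1 - q)))
          ≤ -(logb 2 (min p (1 - p)) * logb 2 (min q (1 - q))) /
            (logb 2 (min p (1 - p)) + logb 2 (min q (1 - q)))) ∧
    Tendsto (fun p : ℝ =>
        -(logb 2 (min p (1 - p)) * logb 2 (min q (1 - q))) /
          (logb 2 (min p (1 - p)) + logb 2 (min q (1 - q))))
      (nhdsWithin 1 (Set.Iio 1)) (nhds (-(logb 2 q))) ∧
    Tendsto (fun p : ℝ =>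
        (logb 2 p * logb 2 (1 - q) - logb 2 q * logb 2 (1 - p)) /
          (logb 2 (p * (1 - p)) + logb 2 (q * (1 - q))))
      (nhdsWithin 1 (Set.Iio 1)) (nhds (-(logb 2 q))) := by
  have hq1 : q < 1 := by linarith
  have hminq : min q (1 - q) = q := min_eq_left (by linarith)
  set a := logb 2 q with ha
  set b := logb 2 (1 - q) with hb
  have ha0 : a < 0 := Real.logb_neg one_lt_two hq0 hq1
  have hb0 : b < 0 := Real.logb_neg one_lt_two (by linarith) (by linarith)
  have hqq : logb 2 (q * (1 - q)) = a + b :=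
    Real.logb_mul (ne_of_gt hq0) (ne_of_gt (by linarith))
  have hIoo : Set.Ioo (1/2 : ℝ) 1 ∈ nhdsWithin 1 (Set.Iio 1) :=
    Ioo_mem_nhdsLT_of_mem (by constructor <;> norm_num)
  refine ⟨?_, ?_, ?_⟩
  · -- eventual inequality
    filter_upwards [hIoo] with p hp
    obtain ⟨hp1, hp2⟩ := hp
    have hminp : min p (1 - p) = 1 - p := min_eq_right (by linarith)
    set x := logb 2 (1 - p) with hx
    set c := logb 2 p with hc
    have hx0 : x < 0 := Real.logb_neg one_lt_two (by linarith) (by linarith)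
    have hc0 : c < 0 := Real.logb_neg one_lt_two (by linarith) hp2
    have hpp : logb 2 (p * (1 - p)) = c + x :=
      Real.logb_mul (by positivity) (ne_of_gt (by linarith))
    rw [hminp, hminq, hpp, hqq]
    have hD1 : (c + x) + (a + b) < 0 := by linarith
    have hD2 : x + a < 0 := by linarith
    rw [show (c * b - a * x) / ((c + x) + (a + b))
        = (-(c * b - a * x)) / (-((c + x) + (a + b))) by rw [neg_div_neg_eq],
      show -(x * a) / (x + a) = (-(-(x * a))) / (-(x + a)) by rw [neg_div_neg_eq],
      div_le_div_iff₀ (by linarith) (by linarith)]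
    have hcb : 0 < c * b := mul_pos_of_neg_of_neg hc0 hb0
    have hax : 0 < a * x := mul_pos_of_neg_of_neg ha0 hx0
    have h1 : c * b * (x + a) ≤ 0 := mul_nonpos_of_nonneg_of_nonpos hcb.le hD2.le
    have h2 : a * x * (b + c) ≤ 0 :=
      mul_nonpos_of_nonneg_of_nonpos hax.le (by linarith)
    nlinarith [h1, h2]
  · -- limit of d
    have hxa : Tendsto (fun p : ℝ => logb 2 (1 - p) + a) (nhdsWithin 1 (Set.Iio 1)) atBot :=
      tendsto_atBot_add_const_right _ a aux_xt
    have hinv : Tendsto (fun p : ℝ => (logb 2 (1 - p) + a)⁻¹)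
        (nhdsWithin 1 (Set.Iio 1)) (nhds 0) := by
      have hneg : Tendsto (fun p : ℝ => -(logb 2 (1 - p) + a))
          (nhdsWithin 1 (Set.Iio 1)) atTop := tendsto_neg_atBot_atTop.comp hxa
      have h2 : Tendsto (fun p : ℝ => -(-(logb 2 (1 - p) + a))⁻¹)
          (nhdsWithin 1 (Set.Iio 1)) (nhds (-0)) := hneg.inv_tendsto_atTop.neg
      simpa only [inv_neg, neg_neg, neg_zero] using h2
    have hlim : Tendsto (fun p : ℝ => -a + a ^ 2 * (logb 2 (1 - p) + a)⁻¹)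
        (nhdsWithin 1 (Set.Iio 1)) (nhds (-a)) := by
      have := (tendsto_const_nhds (x := -a)).add ((tendsto_const_nhds (x := a ^ 2)).mul hinv)
      simpa using this
    refine hlim.congr' ?_ |>.mono_right (by rw [ha])
    filter_upwards [hIoo] with p hp
    obtain ⟨hp1, hp2⟩ := hp
    have hminp : min p (1 - p) = 1 - p := min_eq_right (by linarith)
    set x := logb 2 (1 - p) with hx
    have hx0 : x < 0 := Real.logb_neg one_lt_two (by linarith) (by linarith)
    have hxa0 : x + a ≠ 0 := by intro h; nlinarith
    rw [hminp, hminq, ← hx, ← ha]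
    field_simp
    ring
  · -- limit of r
    have hct : Tendsto (fun p : ℝ => logb 2 p) (nhdsWithin 1 (Set.Iio 1)) (nhds 0) := by
      have : ContinuousAt (logb 2) 1 := Real.continuousAt_logb one_ne_zero
      have h := this.tendsto.mono_left (nhdsWithin_le_nhds (s := Set.Iio 1))
      simpa using h
    have hnum : Tendsto (fun p : ℝ => logb 2 p * b * (logb 2 (1 - p))⁻¹ - a)
        (nhdsWithin 1 (Set.Iio 1)) (nhds (-a)) := by
      have := ((hct.mul (tendsto_const_nhds (x := b))).mul aux_inv_xt).sub
        (tendsto_const_nhds (x := a))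
      simpa using this
    have hden : Tendsto (fun p : ℝ => 1 + (logb 2 p + a + b) * (logb 2 (1 - p))⁻¹)
        (nhdsWithin 1 (Set.Iio 1)) (nhds 1) := by
      have := (tendsto_const_nhds (x := (1:ℝ))).add
        (((hct.add (tendsto_const_nhds (x := a))).add (tendsto_const_nhds (x := b))).mul
          aux_inv_xt)
      simpa using this
    have hlim : Tendsto (fun p : ℝ =>
        (logb 2 p * b * (logb 2 (1 - p))⁻¹ - a) /
          (1 + (logb 2 p + a + b) * (logb 2 (1 - p))⁻¹))
        (nhdsWithin 1 (Set.Iio 1)) (nhds (-a)) := by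
      have h := hnum.div hden one_ne_zero
      rw [div_one] at h
      exact h
    refine hlim.congr' ?_ |>.mono_right (by rw [ha])
    filter_upwards [hIoo] with p hp
    obtain ⟨hp1, hp2⟩ := hp
    set x := logb 2 (1 - p) with hx
    set c := logb 2 p with hc
    have hx0 : x < 0 := Real.logb_neg one_lt_two (by linarith) (by linarith)
    have hc0 : c < 0 := Real.logb_neg one_lt_two (by linarith) hp2
    have hpp : logb 2 (p * (1 - p)) = c + x :=
      Real.logb_mul (by positivity) (ne_of_gt (by linarith))
    have hxne : x ≠ 0 := ne_of_lt hx0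
    have hD1 : (c + x) + (a + b) ≠ 0 := by intro h; nlinarith
    have hD2 : 1 + (c + a + b) * x⁻¹ ≠ 0 := by
      have : 1 + (c + a + b) * x⁻¹ = ((c + x) + (a + b)) * x⁻¹ := by
        field_simp; ring
      rw [this]
      exact mul_ne_zero hD1 (inv_ne_zero hxne)
    rw [hpp, hqq, div_eq_div_iff hD2 hD1]
    field_simp
    ring
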